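/- Let d ≥ 3 and let (G,p) be a cs d-framework that is infinitesimally rigid in ℝ^d and whose point set p(V(G)) affinely spans ℝ^d. Then f_1(G) − d·f_0(G) + C(d+1,2) ≥ C(d,2) − d, where f_0(G), f_1(G) are the numbers of vertices and edges of G. -/

import Mathlib

open Finset
open scoped Classical

noncomputable section

/-- A finite graph: a finite vertex set together with a finite set of edges,
where each edge is (intended to be) a 2-element subset of the vertex set. -/
structure FinGraph (ι : Type) where
  verts : Finset ι
  edges : Finset (Finset ι)

/-- Every edge is a 2-element subset of the vertex set. -/
def FinGraph.Good {ι : Type} (G : FinGraph ι) : Prop :=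
  ∀ e ∈ G.edges, e ⊆ G.verts ∧ e.card = 2

/-- The standard inner (dot) product on `ℝ^d`. -/
def dotR {d : ℕ} (x y : Fin d → ℝ) : ℝ := ∑ i, x i * y i

/-- An infinitesimal motion of the framework `(G, p)`. -/
def IsMotion {ι : Type} {d : ℕ} (G : FinGraph ι) (p m : ι → Fin d → ℝ) : Prop :=
  ∀ e ∈ G.edges, ∀ u ∈ e, ∀ v ∈ e, dotR (p u - p v) (m u - m v) = 0

/-- The framework `(G, p)` is infinitesimally rigid in `ℝ^d`: every infinitesimal
motion is the restriction of a motion `x ↦ A x + b` of `ℝ^d` with `A` skew-symmetric. -/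
def IsInfRigid {ι : Type} (d : ℕ) (G : FinGraph ι) (p : ι → Fin d → ℝ) : Prop :=
  ∀ m : ι → Fin d → ℝ, IsMotion G p m →
    ∃ (A : Matrix (Fin d) (Fin d) ℝ) (b : Fin d → ℝ),
      A.transpose = -A ∧ ∀ v ∈ G.verts, m v = A.mulVec (p v) + b

/-- A stress on the framework `(G, p)`. -/
def IsStress {ι : Type} {d : ℕ} (G : FinGraph ι) (p : ι → Fin d → ℝ)
    (ω : Finset ι → ℝ) : Prop :=
  ∀ v ∈ G.verts,
    (∑ e ∈ G.edges.filter (fun e => v ∈ e), ∑ u ∈ e.erase v, ω e • (p v - p u)) = 0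

/-- A centrally symmetric framework with free involution `ν` satisfying `p (ν v) = -(p v)`. -/
def IsCSFramework {ι : Type} {d : ℕ} (G : FinGraph ι) (p : ι → Fin d → ℝ) (ν : ι → ι) : Prop :=
  (∀ v ∈ G.verts, ν (ν v) = v) ∧
  (∀ v ∈ G.verts, ν v ∈ G.verts) ∧
  (∀ v ∈ G.verts, ν v ≠ v) ∧
  (∀ e ∈ G.edges, e.image ν ∈ G.edges) ∧
  (∀ e ∈ G.edges, e.image ν ≠ e) ∧
  (∀ v ∈ G.verts, p (ν v) = -(p v))

/-- The convex body spanned by a finite point set. -/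
def polyBody {d : ℕ} (V : Finset (Fin d → ℝ)) : Set (Fin d → ℝ) :=
  convexHull ℝ (V : Set (Fin d → ℝ))

/-- `(f, c)` is a supporting functional for `conv V` exposing the face `F`. -/
def IsSupport {d : ℕ} (V : Finset (Fin d → ℝ)) (f : (Fin d → ℝ) →ₗ[ℝ] ℝ) (c : ℝ)
    (F : Set (Fin d → ℝ)) : Prop :=
  (∀ y ∈ polyBody V, f y ≤ c) ∧ F = {y ∈ polyBody V | f y = c}

/-- A proper face of the polytope `conv V`. -/
def IsProperFace {d : ℕ} (V : Finset (Fin d → ℝ)) (F : Set (Fin d → ℝ)) : Prop :=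
  (∃ f c, IsSupport V f c F) ∧ F ≠ polyBody V

/-- A simplicial `d`-polytope in `ℝ^d`, recorded by its vertex set `V`: the polytope is
`conv V`, it is `d`-dimensional, every element of `V` is a vertex, and every proper face
is a simplex (the convex hull of its affinely independent vertex set). -/
structure SPolytope (d : ℕ) where
  V : Finset (Fin d → ℝ)
  span_top : affineSpan ℝ (V : Set (Fin d → ℝ)) = ⊤
  extreme : ∀ v ∈ V, v ∉ convexHull ℝ ((V.erase v : Finset (Fin d → ℝ)) : Set (Fin d → ℝ))
  simplicial : ∀ F : Set (Fin d → ℝ), IsProperFace V F →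
    AffineIndependent ℝ
      (fun x : {y : Fin d → ℝ // y ∈ (V : Set (Fin d → ℝ)) ∩ F} => (x : Fin d → ℝ)) ∧
    F = convexHull ℝ ((V : Set (Fin d → ℝ)) ∩ F)

/-- `s` is a face of the boundary complex `∂P`. -/
def BFace {d : ℕ} (P : SPolytope d) (s : Finset (Fin d → ℝ)) : Prop :=
  s ⊆ P.V ∧ ∃ F : Set (Fin d → ℝ), IsProperFace P.V F ∧ (s : Set (Fin d → ℝ)) ⊆ F

/-- The number of vertices of `∂P`. -/
def f0 {d : ℕ} (P : SPolytope d) : ℕ := P.V.card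

/-- The edges of `∂P`. -/
def edgeFinset {d : ℕ} (P : SPolytope d) : Finset (Finset (Fin d → ℝ)) :=
  P.V.powerset.filter fun e => e.card = 2 ∧ BFace P e

/-- The number of edges of `∂P`. -/
def f1 {d : ℕ} (P : SPolytope d) : ℕ := (edgeFinset P).card

/-- `g₂(P) = f₁ - d f₀ + C(d+1, 2)`. -/
def g2 {d : ℕ} (P : SPolytope d) : ℤ :=
  (f1 P : ℤ) - (d : ℤ) * (f0 P : ℤ) + ((d + 1).choose 2 : ℤ)

/-- `P` is centrally symmetric. -/
def IsCS {d : ℕ} (P : SPolytope d) : Prop := ∀ v ∈ P.V, -v ∈ P.V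

/-- A missing face of `∂P`. -/
def IsMissingFace {d : ℕ} (P : SPolytope d) (σ : Finset (Fin d → ℝ)) : Prop :=
  σ ⊆ P.V ∧ ¬ BFace P σ ∧ ∀ τ ⊂ σ, BFace P τ

/-- `P` is prime: `∂P` has no missing facet, i.e. no missing face of cardinality `d`. -/
def IsPrimePoly {d : ℕ} (P : SPolytope d) : Prop :=
  ¬ ∃ σ : Finset (Fin d → ℝ), IsMissingFace P σ ∧ σ.card = d

/-- The graph (1-skeleton) of `∂P` as a framework graph. -/
def fullGraph {d : ℕ} (P : SPolytope d) : FinGraph (Fin d → ℝ) :=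
  ⟨P.V, edgeFinset P⟩

/-- The graph (1-skeleton) of the star of the face `τ` in `∂P`. -/
def starGraph {d : ℕ} (P : SPolytope d) (τ : Finset (Fin d → ℝ)) : FinGraph (Fin d → ℝ) :=
  ⟨P.V.filter fun v => BFace P (insert v τ),
   P.V.powerset.filter fun e => e.card = 2 ∧ BFace P (e ∪ τ)⟩

/-- Adjacency in the graph of `∂P`. -/
def Adj {d : ℕ} (P : SPolytope d) (u v : Fin d → ℝ) : Prop :=
  u ≠ v ∧ BFace P {u, v}

/-- `σ` is a face of the link of the face `τ` in `∂P`. -/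
def LinkFace {d : ℕ} (P : SPolytope d) (τ σ : Finset (Fin d → ℝ)) : Prop :=
  Disjoint σ τ ∧ BFace P (σ ∪ τ)

/-- `P` is a `d`-dimensional cross-polytope: its vertex set is `{±b₁, …, ±b_d}`
for some basis `b₁, …, b_d` of `ℝ^d`. -/
def IsCrossPolytope {d : ℕ} (P : SPolytope d) : Prop :=
  ∃ b : Fin d → (Fin d → ℝ), LinearIndependent ℝ b ∧
    (P.V : Set (Fin d → ℝ)) = Set.range b ∪ Set.range (fun i => -(b i))

/-- A facet of `P`: a proper face with `d` vertices. -/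
def IsFacet {d : ℕ} (P : SPolytope d) (F : Set (Fin d → ℝ)) : Prop :=
  IsProperFace P.V F ∧ ((P.V : Set (Fin d → ℝ)) ∩ F).ncard = d

/-- `x` lies beyond exactly one facet of `P`: it is strictly separated from `P` by the
affine hull of one facet `F`, and not separated from `P` by the affine hull of any
other facet. -/
def BeyondExactlyOne {d : ℕ} (P : SPolytope d) (x : Fin d → ℝ) : Prop :=
  ∃ F : Set (Fin d → ℝ), IsFacet P F ∧
    (∀ f c, IsSupport P.V f c F → c < f x) ∧
    (∀ F' : Set (Fin d → ℝ), IsFacet P F' → F' ≠ F →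
      ∀ f c, IsSupport P.V f c F' → f x < c)

/-- `P` is obtained from a `d`-dimensional cross-polytope by symmetric stacking: there is
a sequence of cs simplicial `d`-polytopes starting at a cross-polytope and ending at `P`,
each obtained from the previous one as `conv (P_k ∪ {v, -v})` for a point `v` lying
beyond exactly one facet of `P_k`. -/
def SymmetricStackingFrom {d : ℕ} (P : SPolytope d) : Prop :=
  ∃ (m : ℕ) (Q : Fin (m + 1) → SPolytope d),
    (∀ k, IsCS (Q k)) ∧
    IsCrossPolytope (Q 0) ∧
    Q (Fin.last m) = P ∧
    ∀ k : Fin m, ∃ v : Fin d → ℝ,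
      BeyondExactlyOne (Q (Fin.castSucc k)) v ∧
      polyBody (Q (Fin.succ k)).V =
        convexHull ℝ (polyBody (Q (Fin.castSucc k)).V ∪ {v, -v})

/-- `P` is a stacked `d`-polytope: obtained from a `d`-simplex by repeatedly adding a
point beyond exactly one facet. -/
def IsStacked {d : ℕ} (P : SPolytope d) : Prop :=
  ∃ (m : ℕ) (R : Fin (m + 1) → SPolytope d),
    (R 0).V.card = d + 1 ∧
    R (Fin.last m) = P ∧
    ∀ k : Fin m, ∃ v : Fin d → ℝ,
      BeyondExactlyOne (R (Fin.castSucc k)) v ∧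
      polyBody (R (Fin.succ k)).V =
        convexHull ℝ (polyBody (R (Fin.castSucc k)).V ∪ {v})

/-- Every `d` vertices of `P`, no two of which are antipodal, are affinely independent. -/
def GenPos {d : ℕ} (P : SPolytope d) : Prop :=
  ∀ S : Finset (Fin d → ℝ), S ⊆ P.V → S.card = d →
    (∀ x ∈ S, ∀ y ∈ S, x ≠ -y) →
    AffineIndependent ℝ (fun s : {x : Fin d → ℝ // x ∈ S} => (s : Fin d → ℝ))

/-- The graph of the cone `v₀ * S` over a simplicial complex `S` (a set of finsets):
the vertices of `S` together with `v₀`, and the edges of `S` together with all edges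
from `v₀` to vertices of `S`. -/
def coneGraph {d : ℕ} (P : SPolytope d) (v0 : Fin d → ℝ)
    (S : Set (Finset (Fin d → ℝ))) : FinGraph (Fin d → ℝ) :=
  ⟨insert v0 (P.V.filter fun u => ({u} : Finset (Fin d → ℝ)) ∈ S),
   (P.V.powerset.filter fun e => e.card = 2 ∧ e ∈ S) ∪
     (P.V.filter fun u => ({u} : Finset (Fin d → ℝ)) ∈ S).image
       fun u => ({v0, u} : Finset (Fin d → ℝ))⟩

section aux
variable {ι : Type} [DecidableEq ι]

lemma invol_split (f : ι → ι) :
    ∀ (n : ℕ) (s : Finset ι), s.card = n →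
      (∀ x ∈ s, f x ∈ s) → (∀ x ∈ s, f (f x) = x) → (∀ x ∈ s, f x ≠ x) →
      ∃ R : Finset ι, R ⊆ s ∧ s.card = 2 * R.card ∧ ∀ x ∈ s, (x ∈ R ↔ f x ∉ R) := by
  intro n
  induction n using Nat.strong_induction_on with
  | _ n ih =>
    intro s hcard hmap hinv hfix
    rcases s.eq_empty_or_nonempty with rfl | ⟨a, ha⟩
    · exact ⟨∅, by simp⟩
    · have hfa : f a ∈ s := hmap a ha
      have hane : f a ≠ a := hfix a ha
      set s' := s \ {a, f a} with hs'
      have hpairsub : ({a, f a} : Finset ι) ⊆ s := by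
        intro x hx; rcases Finset.mem_insert.1 hx with rfl | hx
        · exact ha
        · rw [Finset.mem_singleton.1 hx]; exact hfa
      have hpaircard : ({a, f a} : Finset ι).card = 2 := by
        rw [Finset.card_insert_of_notMem (by simp [Ne.symm hane]), Finset.card_singleton]
      have hcard2 : 2 ≤ s.card := by
        calc 2 = ({a, f a} : Finset ι).card := hpaircard.symm
          _ ≤ s.card := Finset.card_le_card hpairsub
      have hcard' : s'.card = s.card - 2 := by
        rw [hs', Finset.card_sdiff_of_subset hpairsub, hpaircard]
      have hs'sub : s' ⊆ s := Finset.sdiff_subset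
      have hnota : a ∉ s' := by simp [hs']
      have hnotfa : f a ∉ s' := by simp [hs']
      have hmem' : ∀ x, x ∈ s' ↔ x ∈ s ∧ x ≠ a ∧ x ≠ f a := by
        intro x; simp [hs', and_assoc, not_or]
      have hmap' : ∀ x ∈ s', f x ∈ s' := by
        intro x hx
        rcases (hmem' x).1 hx with ⟨hxs, hxa, hxfa⟩
        refine (hmem' (f x)).2 ⟨hmap x hxs, ?_, ?_⟩
        · intro h; apply hxfa; rw [← hinv x hxs, h]
        · intro h
          have := congrArg f h
          rw [hinv x hxs, hinv a ha] at this
          exact hxa this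
      have hinv' : ∀ x ∈ s', f (f x) = x := fun x hx => hinv x (hs'sub hx)
      have hfix' : ∀ x ∈ s', f x ≠ x := fun x hx => hfix x (hs'sub hx)
      obtain ⟨R', hR'sub, hR'card, hR'prop⟩ :=
        ih s'.card (by omega) s' rfl hmap' hinv' hfix'
      refine ⟨insert a R', ?_, ?_, ?_⟩
      · intro x hx; rcases Finset.mem_insert.1 hx with rfl | hx
        · exact ha
        · exact hs'sub (hR'sub hx)
      · have : a ∉ R' := fun h => hnota (hR'sub h)
        rw [Finset.card_insert_of_notMem this]
        omega
      · intro x hxs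
        by_cases hxa : x = a
        · subst hxa
          simp only [Finset.mem_insert, true_or, true_iff]
          intro h
          rcases h with h' | h'
          · exact hane h'
          · exact hnotfa (hR'sub h')
        · by_cases hxfa : x = f a
          · subst hxfa
            have h1 : f a ∉ insert a R' := by
              intro h
              rcases Finset.mem_insert.1 h with h' | h'
              · exact hane h'
              · exact hnotfa (hR'sub h')
            have h2 : f (f a) ∈ insert a R' := by
              rw [hinv a ha]; exact Finset.mem_insert_self a R'
            simp [h1, h2]
          · have hxs' : x ∈ s' := (hmem' x).2 ⟨hxs, hxa, hxfa⟩
            have hfxa : f x ≠ a := by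
              intro h
              have := congrArg f h
              rw [hinv x hxs] at this
              exact hxfa this
            have hfxR' := hR'prop x hxs'
            constructor
            · intro h hfxR
              rcases Finset.mem_insert.1 h with h' | h'
              · exact hxa h'
              rcases Finset.mem_insert.1 hfxR with h'' | h''
              · exact hfxa h''
              · exact (hfxR'.1 h') h''
            · intro h
              refine Finset.mem_insert.2 (Or.inr ?_)
              by_contra hxR'
              have : f x ∈ R' := by
                by_contra hfx
                exact hxR' (hfxR'.2 hfx)
              exact h (Finset.mem_insert.2 (Or.inr this))

end aux

lemma dotR_add_right {d : ℕ} (x a b : Fin d → ℝ) : dotR x (a + b) = dotR x a + dotR x b := by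
  simp [dotR, Pi.add_apply, mul_add, Finset.sum_add_distrib]

lemma dotR_smul_right {d : ℕ} (c : ℝ) (x a : Fin d → ℝ) : dotR x (c • a) = c * dotR x a := by
  rw [dotR, dotR, Finset.mul_sum]
  exact Finset.sum_congr rfl fun i _ => by simp; ring

lemma dotR_zero_left {d : ℕ} (y : Fin d → ℝ) : dotR 0 y = 0 := by simp [dotR]

lemma dotR_neg_neg {d : ℕ} (x y : Fin d → ℝ) : dotR (-x) (-y) = dotR x y := by
  simp [dotR]

lemma dotR_neg_left {d : ℕ} (x y : Fin d → ℝ) : dotR (-x) y = -dotR x y := by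
  simp [dotR, Finset.sum_neg_distrib]

section framework
variable {ι : Type} {d : ℕ}

/-- Symmetric extension of a function on representatives. -/
def sext (R : Finset ι) (ν : ι → ι) (x : {v // v ∈ R} → Fin d → ℝ) : ι → Fin d → ℝ :=
  fun v => if h : v ∈ R then x ⟨v, h⟩ else if h' : ν v ∈ R then x ⟨ν v, h'⟩ else 0

lemma sext_add (R : Finset ι) (ν : ι → ι) (x y : {v // v ∈ R} → Fin d → ℝ) (v : ι) :
    sext R ν (x + y) v = sext R ν x v + sext R ν y v := by
  unfold sext; split_ifs <;> simp

lemma sext_smul (R : Finset ι) (ν : ι → ι) (c : ℝ) (x : {v // v ∈ R} → Fin d → ℝ) (v : ι) :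
    sext R ν (c • x) v = c • sext R ν x v := by
  unfold sext; split_ifs <;> simp

lemma sext_mem (R : Finset ι) (ν : ι → ι) (x : {v // v ∈ R} → Fin d → ℝ) (v : ι) (h : v ∈ R) :
    sext R ν x v = x ⟨v, h⟩ := by
  unfold sext; rw [dif_pos h]

/-- The halved rigidity map. -/
def Phi (p : ι → Fin d → ℝ) (ν : ι → ι) (R : Finset ι) (ER : Finset (Finset ι)) :
    ({v // v ∈ R} → Fin d → ℝ) →ₗ[ℝ] ({e // e ∈ ER} → ℝ) where
  toFun x := fun e => ∑ u ∈ e.1, ∑ v ∈ e.1,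
    dotR (p u - p v) (sext R ν x u - sext R ν x v)
  map_add' x y := by
    funext e
    simp only [Pi.add_apply]
    rw [← Finset.sum_add_distrib]
    refine Finset.sum_congr rfl fun u _ => ?_
    rw [← Finset.sum_add_distrib]
    refine Finset.sum_congr rfl fun v _ => ?_
    rw [sext_add, sext_add,
      show sext R ν x u + sext R ν y u - (sext R ν x v + sext R ν y v)
        = (sext R ν x u - sext R ν x v) + (sext R ν y u - sext R ν y v) by abel,
      dotR_add_right]
  map_smul' c x := by
    funext e
    simp only [Pi.smul_apply, RingHom.id_apply, smul_eq_mul, Finset.mul_sum]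
    refine Finset.sum_congr rfl fun u _ => ?_
    refine Finset.sum_congr rfl fun v _ => ?_
    rw [sext_smul, sext_smul,
      show c • sext R ν x u - c • sext R ν x v = c • (sext R ν x u - sext R ν x v) by
        rw [smul_sub],
      dotR_smul_right]

end framework

/-- If `d ≥ 3` and `(G, p)` is a cs `d`-framework that is infinitesimally
rigid in `ℝ^d` and affinely spans `ℝ^d`, then `f₁(G) - d f₀(G) + C(d+1,2) ≥ C(d,2) - d`. -/
theorem stmt2 {ι : Type} {d : ℕ} (hd : 3 ≤ d) (G : FinGraph ι) (p : ι → Fin d → ℝ)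
    (ν : ι → ι) (hGood : G.Good) (hcs : IsCSFramework G p ν)
    (hrig : IsInfRigid d G p)
    (hspan : affineSpan ℝ (p '' (G.verts : Set ι)) = ⊤) :
    (d.choose 2 : ℤ) - (d : ℤ) ≤
      (G.edges.card : ℤ) - (d : ℤ) * (G.verts.card : ℤ) + ((d + 1).choose 2 : ℤ) := by
  classical
  obtain ⟨hinv, hmap, hfix, hemap, hefix, hpneg⟩ := hcs
  obtain ⟨R, hRsub, hRcard, hRprop⟩ :=
    invol_split ν G.verts.card G.verts rfl hmap hinv hfix
  have heinv : ∀ e ∈ G.edges, ((e.image ν).image ν) = e := by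
    intro e he
    rw [Finset.image_image]
    have h1 : ∀ x ∈ e, (ν ∘ ν) x = id x := fun x hx => hinv x ((hGood e he).1 hx)
    rw [Finset.image_congr h1, Finset.image_id]
  obtain ⟨ER, hERsub, hERcard, hERprop⟩ :=
    invol_split (fun e => e.image ν) G.edges.card G.edges rfl hemap heinv hefix
  -- the vertex set is nonempty
  have hVne : G.verts.Nonempty := by
    by_contra h
    rw [Finset.not_nonempty_iff_eq_empty] at h
    rw [h, Finset.coe_empty, Set.image_empty, AffineSubspace.span_empty] at hspan
    have h0 : (0 : Fin d → ℝ) ∈ (⊥ : AffineSubspace ℝ (Fin d → ℝ)) := by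
      rw [hspan]; trivial
    exact AffineSubspace.notMem_bot ℝ (Fin d → ℝ) (0 : Fin d → ℝ) h0
  -- symmetry of the extension
  have hsym : ∀ (x : {v // v ∈ R} → Fin d → ℝ), ∀ v ∈ G.verts,
      sext R ν x (ν v) = sext R ν x v := by
    intro x v hv
    by_cases h : v ∈ R
    · have hnu : ν v ∉ R := (hRprop v hv).1 h
      have hnn : ν (ν v) ∈ R := by rw [hinv v hv]; exact h
      unfold sext
      rw [dif_neg hnu, dif_pos hnn, dif_pos h]
      have hvv : (⟨ν (ν v), hnn⟩ : {a // a ∈ R}) = ⟨v, h⟩ := Subtype.ext (hinv v hv)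
      rw [hvv]
    · have hnu : ν v ∈ R := by
        by_contra h'
        exact h ((hRprop v hv).2 h')
      unfold sext
      rw [dif_pos hnu, dif_neg h, dif_pos hnu]
  set Φ := Phi p ν R ER with hΦ
  have gsymm : ∀ (a b c e : Fin d → ℝ), dotR (b - a) (e - c) = dotR (a - b) (c - e) := by
    intro a b c e
    rw [← neg_sub a b, ← neg_sub c e, dotR_neg_neg]
  -- kernel elements are constant
  have hker : ∀ x ∈ LinearMap.ker Φ, ∃ b : Fin d → ℝ, ∀ r : {v // v ∈ R}, x r = b := by
    intro x hx
    have hx0 : Φ x = 0 := LinearMap.mem_ker.1 hx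
    have hA : ∀ e ∈ ER, ∀ u ∈ e, ∀ v ∈ e,
        dotR (p u - p v) (sext R ν x u - sext R ν x v) = 0 := by
      intro e he u hu v hv
      have heE : e ∈ G.edges := hERsub he
      obtain ⟨hsubV, hc2⟩ := hGood e heE
      obtain ⟨a, b, hab, rfl⟩ := Finset.card_eq_two.1 hc2
      have h0 : (0:ℝ) = ∑ u ∈ ({a, b} : Finset ι), ∑ v ∈ ({a, b} : Finset ι),
          dotR (p u - p v) (sext R ν x u - sext R ν x v) := by
        have := congrFun hx0 ⟨{a, b}, he⟩
        simpa [hΦ, Phi] using this.symm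
      rw [Finset.sum_pair hab, Finset.sum_pair hab, Finset.sum_pair hab] at h0
      have hzaa : dotR (p a - p a) (sext R ν x a - sext R ν x a) = 0 := by
        simp [sub_self, dotR_zero_left]
      have hzbb : dotR (p b - p b) (sext R ν x b - sext R ν x b) = 0 := by
        simp [sub_self, dotR_zero_left]
      have hsba : dotR (p b - p a) (sext R ν x b - sext R ν x a)
          = dotR (p a - p b) (sext R ν x a - sext R ν x b) := gsymm _ _ _ _
      have hgab : dotR (p a - p b) (sext R ν x a - sext R ν x b) = 0 := by
        rw [hzaa, hzbb, hsba] at h0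
        linarith
      rcases Finset.mem_insert.1 hu with rfl | hu' <;>
        rcases Finset.mem_insert.1 hv with h2 | hv'
      · rw [h2]; simp [sub_self, dotR_zero_left]
      · rw [Finset.mem_singleton.1 hv']; exact hgab
      · rw [Finset.mem_singleton.1 hu', h2]; rw [hsba]; exact hgab
      · rw [Finset.mem_singleton.1 hu', Finset.mem_singleton.1 hv']
        simp [sub_self, dotR_zero_left]
    have hmot : IsMotion G p (sext R ν x) := by
      intro e he u hu v hv
      by_cases heER : e ∈ ER
      · exact hA e heER u hu v hv
      · have heER' : e.image ν ∈ ER := by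
          by_contra h'
          exact heER ((hERprop e he).2 h')
        have huV : u ∈ G.verts := (hGood e he).1 hu
        have hvV : v ∈ G.verts := (hGood e he).1 hv
        have h1 := hA (e.image ν) heER' (ν u) (Finset.mem_image_of_mem ν hu)
          (ν v) (Finset.mem_image_of_mem ν hv)
        rw [hpneg u huV, hpneg v hvV, hsym x u huV, hsym x v hvV,
          show -(p u) - -(p v) = -(p u - p v) by abel,
          dotR_neg_left, neg_eq_zero] at h1
        exact h1
    obtain ⟨A, b, hAskew, hAb⟩ := hrig (sext R ν x) hmot
    have hb : ∀ v ∈ G.verts, sext R ν x v = b := by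
      intro v hv
      have h1 := hAb v hv
      have h2 := hAb (ν v) (hmap v hv)
      have h3 : sext R ν x (ν v) = sext R ν x v := hsym x v hv
      rw [h1, h2, hpneg v hv, Matrix.mulVec_neg] at h3
      have h5 : -(A.mulVec (p v)) = A.mulVec (p v) := add_right_cancel h3
      have h4 : A.mulVec (p v) = 0 := by
        funext i
        have := congrFun h5 i
        simp only [Pi.neg_apply] at this
        simp only [Pi.zero_apply]
        linarith
      rw [h1, h4, zero_add]
    refine ⟨b, fun r => ?_⟩
    have hrV : r.1 ∈ G.verts := hRsub r.2
    have hbr := hb r.1 hrV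
    rw [sext_mem R ν x r.1 r.2] at hbr
    simpa using hbr
  -- R is nonempty
  have hRne : R.Nonempty := by
    rw [← Finset.card_pos]
    have := Finset.card_pos.2 hVne
    omega
  obtain ⟨r0, hr0⟩ := hRne
  -- nullity bound
  have hnull : Module.finrank ℝ (LinearMap.ker Φ) ≤ d := by
    set f : LinearMap.ker Φ →ₗ[ℝ] (Fin d → ℝ) :=
      (LinearMap.proj (⟨r0, hr0⟩ : {v // v ∈ R})).comp (LinearMap.ker Φ).subtype with hf
    have hfinj : Function.Injective f := by
      intro x y hxy
      obtain ⟨bx, hbx⟩ := hker x.1 x.2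
      obtain ⟨by', hby⟩ := hker y.1 y.2
      have hbb : bx = by' := by
        rw [← hbx ⟨r0, hr0⟩, ← hby ⟨r0, hr0⟩]
        exact hxy
      apply Subtype.ext
      funext r
      rw [hbx r, hby r, hbb]
    calc Module.finrank ℝ (LinearMap.ker Φ) ≤ Module.finrank ℝ (Fin d → ℝ) :=
          LinearMap.finrank_le_finrank_of_injective hfinj
      _ = d := Module.finrank_fin_fun ℝ
  -- rank bound
  have hrank : Module.finrank ℝ (LinearMap.range Φ) ≤ ER.card := by
    calc Module.finrank ℝ (LinearMap.range Φ)
        ≤ Module.finrank ℝ ({e // e ∈ ER} → ℝ) := Submodule.finrank_le _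
      _ = Fintype.card {e // e ∈ ER} := Module.finrank_fintype_fun_eq_card ℝ
      _ = ER.card := Fintype.card_coe ER
  -- domain dimension
  have hdom : Module.finrank ℝ ({v // v ∈ R} → Fin d → ℝ) = R.card * d := by
    rw [Module.finrank_pi_fintype ℝ]
    simp [Module.finrank_fin_fun, Finset.sum_const, Fintype.card_coe]
  have hrn := LinearMap.finrank_range_add_finrank_ker Φ
  have hkey : R.card * d ≤ ER.card + d := by
    rw [hdom] at hrn
    omega
  have hchoose : (d + 1).choose 2 = d + d.choose 2 := by
    rw [Nat.choose_succ_succ, Nat.choose_one_right]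
  have hkey' : (R.card : ℤ) * d ≤ (ER.card : ℤ) + d := by exact_mod_cast hkey
  have h1 : (G.verts.card : ℤ) = 2 * R.card := by exact_mod_cast hRcard
  have h2 : (G.edges.card : ℤ) = 2 * ER.card := by exact_mod_cast hERcard
  have h3 : (((d : ℕ) + 1).choose 2 : ℤ) = (d : ℤ) + (d.choose 2 : ℤ) := by
    exact_mod_cast hchoose
  rw [h1, h2, h3]
  nlinarith [hkey']
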